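/- In the setting of the mean-square estimate for I₁, the sum over pairs of distant singular points satisfies L₂ := ∑_{σ₁=α₁+iβ₁, σ₂=α₂+iβ₂ ∈ Λ', T/2 < β₁,β₂ < 3T, |β₁−β₂| ≥ U} ∫_T^{2T} O(X^{2(ρ+u)}|c+i(β₁−t)|^{−n}|c−i(β₂−t)|^{−n}) dt = O(T^{2d+ε} U^{−n} X^{2(ρ+u)}), for every integer n ≥ 1. -/

import Mathlib

open Complex Set Filter

/-- The setting of Hashimoto's paper: an infinite countable set `P` of "primes" with a
norm map `Nv : P → ℝ` whose values exceed `1`, such that `∑ Nv p ^ (-a)` has abscissa of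
convergence `a_P = 1`; the associated zeta function `Z`, defined by the Euler product
`∏_p (1 - Nv p ^ (-s))⁻¹` on `Re s > 1`, is assumed (i) to extend holomorphically and
non-vanishingly to `{Re s ≥ 1}` except for a simple pole at `s = 1`, and (ii) to continue
to all of `ℂ` as a meromorphic function of finite order `d ≥ 0`; its singular points
(zeros and poles), counted with multiplicity, are enumerated by `Λ : ℕ → ℂ`, and satisfy
the counting estimates `T^(d-ε) ≪ #{σ ∈ Λ_P : |σ| < T} ≪ T^(d+ε)`. -/
structure ZetaSystem where
  /-- the set of "primes" -/
  P : Type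
  countable_P : Countable P
  infinite_P : Infinite P
  /-- the norm map -/
  Nv : P → ℝ
  one_lt_Nv : ∀ p : P, 1 < Nv p
  /-- `∑ Nv p ^ (-a) < ∞` for `a > 1` -/
  summable_rpow : ∀ a : ℝ, 1 < a → Summable fun p : P => Nv p ^ (-a)
  /-- the abscissa of convergence is normalized: `a_P = 1`. -/
  not_summable_rpow : ∀ a : ℝ, 0 < a → a < 1 → ¬ Summable fun p : P => Nv p ^ (-a)
  Nv_lt_finite : ∀ x : ℝ, {p : P | Nv p < x}.Finite
  /-- the (meromorphically continued) zeta function of `P` -/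
  Z : ℂ → ℂ
  /-- the Euler product formula for `Re s > 1` -/
  euler : ∀ s : ℂ, 1 < s.re → Z s = ∏' p : P, (1 - (Nv p : ℂ) ^ (-s))⁻¹
  /-- (i): `Z` is non-zero holomorphic on `{Re s ≥ 1} \ {1}` … -/
  analytic_nonzero : ∀ s : ℂ, 1 ≤ s.re → s ≠ 1 → AnalyticAt ℂ Z s ∧ Z s ≠ 0
  /-- … with a simple pole at `s = 1` -/
  simple_pole : ∃ g : ℂ → ℂ, AnalyticAt ℂ g 1 ∧ g 1 ≠ 0 ∧
    ∀ s : ℂ, 1 ≤ s.re → s ≠ 1 → Z s = g s / (s - 1)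
  /-- (ii): `Z` is meromorphic on all of `ℂ` … -/
  meromorphic : ∀ s : ℂ, MeromorphicAt Z s
  /-- the order of `Z` as a meromorphic function -/
  d : ℝ
  d_nonneg : 0 ≤ d
  /-- an enumeration of the singular points (zeros and poles) of `Z`, with multiplicity -/
  Λ : ℕ → ℂ
  Λ_spec : ∀ s : ℂ, s ∈ Set.range Λ ↔ ¬ (AnalyticAt ℂ Z s ∧ Z s ≠ 0)
  Λ_finite : ∀ T : ℝ, {n : ℕ | ‖Λ n‖ < T}.Finite
  /-- `#{σ ∈ Λ_P : |σ| < T} ≪ T^(d+ε)` -/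
  count_upper : ∀ ε : ℝ, 0 < ε → ∃ C : ℝ, 0 < C ∧ ∀ T : ℝ, 2 ≤ T →
    (Nat.card {n : ℕ | ‖Λ n‖ < T} : ℝ) ≤ C * T ^ (d + ε)
  /-- `T^(d-ε) ≪ #{σ ∈ Λ_P : |σ| < T}` -/
  count_lower : ∀ ε : ℝ, 0 < ε → ∃ c : ℝ, 0 < c ∧ ∀ T : ℝ, 2 ≤ T →
    c * T ^ (d - ε) ≤ (Nat.card {n : ℕ | ‖Λ n‖ < T} : ℝ)

namespace ZetaSystem

/-- `d₁ ∈ [0, d]` satisfies `#{σ ∈ Λ_P : T-1 < |σ| < T+1} ≪ T^(d₁+ε)` for every `ε > 0`. -/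
def annulusBound (S : ZetaSystem) (d₁ : ℝ) : Prop :=
  0 ≤ d₁ ∧ d₁ ≤ S.d ∧ ∀ ε : ℝ, 0 < ε → ∃ C : ℝ, 0 < C ∧ ∀ T : ℝ, 2 ≤ T →
    (Nat.card {n : ℕ | T - 1 < ‖S.Λ n‖ ∧ ‖S.Λ n‖ < T + 1} : ℝ)
      ≤ C * T ^ (d₁ + ε)

/-- `ζ_P` has at most finitely many singular points (with multiplicity) in `{Re s ≥ ρ}`. -/
def finitelyManySingIn (S : ZetaSystem) (ρ : ℝ) : Prop :=
  {n : ℕ | ρ ≤ (S.Λ n).re}.Finite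

/-- `∑_{N ∈ Norm(P), N < x} m(N)²`, expressed as the number of pairs `(p₁, p₂)`
with `N(p₁) = N(p₂) < x`. -/
noncomputable def msq (S : ZetaSystem) (x : ℝ) : ℕ :=
  Nat.card {q : S.P × S.P // S.Nv q.1 = S.Nv q.2 ∧ S.Nv q.1 < x}

/-- `x^(α-ε) ≪ ∑_{N ∈ Norm(P), N < x} m(N)² ≪ x^(α+ε)` for every `ε > 0`. -/
def multExp (S : ZetaSystem) (α : ℝ) : Prop :=
  (∀ ε : ℝ, 0 < ε → ∃ c : ℝ, 0 < c ∧ ∀ x : ℝ, 2 ≤ x → c * x ^ (α - ε) ≤ (S.msq x : ℝ)) ∧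
  (∀ ε : ℝ, 0 < ε → ∃ C : ℝ, 0 < C ∧ ∀ x : ℝ, 2 ≤ x → (S.msq x : ℝ) ≤ C * x ^ (α + ε))

end ZetaSystem

/-- Pairs of singular points of `ζ_P` (indexed with multiplicity) lying in
`Λ' = {σ = α + iβ : |β| > T'', α > -T}` with `T/2 < β₁, β₂ < 3T` and `|β₁ - β₂| ≥ U`. -/
def ZetaSystem.farPairs (S : ZetaSystem) (T'' T U : ℝ) : Set (ℕ × ℕ) :=
  {q : ℕ × ℕ | (T'' < |(S.Λ q.1).im| ∧ -T < (S.Λ q.1).re) ∧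
    (T'' < |(S.Λ q.2).im| ∧ -T < (S.Λ q.2).re) ∧
    (T / 2 < (S.Λ q.1).im ∧ (S.Λ q.1).im < 3 * T) ∧
    (T / 2 < (S.Λ q.2).im ∧ (S.Λ q.2).im < 3 * T) ∧
    U ≤ |(S.Λ q.1).im - (S.Λ q.2).im|}


lemma aux_integral_arsinh (c β T : ℝ) (hc : 0 < c) (hT : 0 ≤ T)
    (hβ0 : 0 < β) (hβ3 : β < 3 * T) :
    ∫ t in T..(2 * T), (Real.sqrt (c ^ 2 + (β - t) ^ 2))⁻¹
      ≤ 2 * Real.arsinh (3 * T / c) := by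
  have hpos : ∀ t : ℝ, 0 < Real.sqrt (c ^ 2 + (β - t) ^ 2) := fun t =>
    Real.sqrt_pos.2 (by positivity)
  have hcont : Continuous fun t : ℝ => (Real.sqrt (c ^ 2 + (β - t) ^ 2))⁻¹ := by
    apply Continuous.inv₀
    · exact (continuous_const.add ((continuous_const.sub continuous_id).pow 2)).sqrt
    · exact fun t => (hpos t).ne'
  have hderiv : ∀ t ∈ Set.uIcc T (2 * T),
      HasDerivAt (fun t => Real.arsinh ((t - β) / c))
        ((Real.sqrt (c ^ 2 + (β - t) ^ 2))⁻¹) t := by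
    intro t _
    have h1 : HasDerivAt (fun t : ℝ => (t - β) / c) (1 / c) t := by
      simpa using ((hasDerivAt_id t).sub_const β).div_const c
    have h2 := (Real.hasDerivAt_arsinh ((t - β) / c)).comp t h1
    refine h2.congr_deriv ?_
    have key : Real.sqrt (c ^ 2 + (β - t) ^ 2)
        = c * Real.sqrt (1 + ((t - β) / c) ^ 2) := by
      rw [show c ^ 2 + (β - t) ^ 2 = c ^ 2 * (1 + ((t - β) / c) ^ 2) by
        field_simp; ring]
      rw [Real.sqrt_mul (sq_nonneg c), Real.sqrt_sq hc.le]
    rw [key, mul_inv]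
    ring
  rw [intervalIntegral.integral_eq_sub_of_hasDerivAt hderiv (hcont.intervalIntegrable _ _)]
  have m1 : Real.arsinh ((2 * T - β) / c) ≤ Real.arsinh (3 * T / c) :=
    Real.arsinh_le_arsinh.2 ((div_le_div_iff_of_pos_right hc).2 (by linarith))
  have m2 : -Real.arsinh ((T - β) / c) ≤ Real.arsinh (3 * T / c) := by
    rw [← Real.arsinh_neg, ← neg_div]
    exact Real.arsinh_le_arsinh.2 ((div_le_div_iff_of_pos_right hc).2 (by linarith))
  linarith

lemma aux_pointwise (c u a b : ℝ) (n : ℕ) (hn : 1 ≤ n) (hc : 0 < c) (hu : 0 < u)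
    (hca : c ≤ a) (hcb : c ≤ b) (hab : u / 2 ≤ a ∨ u / 2 ≤ b) :
    (a ^ n)⁻¹ * (b ^ n)⁻¹
      ≤ (max 1 c⁻¹) ^ (n - 1) * (2 / u) ^ n * (a⁻¹ + b⁻¹) := by
  set M := max 1 c⁻¹ with hM
  have hM1 : (1 : ℝ) ≤ M := le_max_left _ _
  have hMc : c⁻¹ ≤ M := le_max_right _ _
  have ha0 : 0 < a := lt_of_lt_of_le hc hca
  have hb0 : 0 < b := lt_of_lt_of_le hc hcb
  have hstep : ∀ x y : ℝ, 0 < x → 0 < y → c ≤ y → u / 2 ≤ x →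
      (x ^ n)⁻¹ * (y ^ n)⁻¹ ≤ M ^ (n - 1) * (2 / u) ^ n * y⁻¹ := by
    intro x y hx hy hcy hux
    have h1 : (x ^ n)⁻¹ ≤ (2 / u) ^ n := by
      rw [show (2 / u : ℝ) ^ n = ((u / 2) ^ n)⁻¹ by
        rw [← inv_pow, inv_div]]
      exact one_div_le_one_div_of_le (by positivity) (pow_le_pow_left₀ (by positivity) hux n)
        |>.trans_eq (by rw [one_div]) |>.trans_eq' (by rw [one_div])
    have h2 : (y ^ n)⁻¹ ≤ M ^ (n - 1) * y⁻¹ := by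
      have hy' : y ^ n = y ^ (n - 1) * y := by
        conv_lhs => rw [show n = (n - 1) + 1 from (Nat.succ_pred_eq_of_pos hn).symm]
        rw [pow_succ]
      rw [hy', mul_inv]
      have h3 : (y ^ (n - 1))⁻¹ ≤ M ^ (n - 1) := by
        have : (c ^ (n - 1))⁻¹ ≤ M ^ (n - 1) := by
          rw [← inv_pow]
          exact pow_le_pow_left₀ (by positivity) hMc _
        refine le_trans ?_ this
        exact one_div_le_one_div_of_le (by positivity)
          (pow_le_pow_left₀ hc.le hcy _) |>.trans_eq (by rw [one_div]) |>.trans_eq' (by rw [one_div])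
      exact mul_le_mul_of_nonneg_right h3 (by positivity)
    calc (x ^ n)⁻¹ * (y ^ n)⁻¹ ≤ (2 / u) ^ n * (M ^ (n - 1) * y⁻¹) :=
          mul_le_mul h1 h2 (by positivity) (by positivity)
      _ = M ^ (n - 1) * (2 / u) ^ n * y⁻¹ := by ring
  rcases hab with h | h
  · calc (a ^ n)⁻¹ * (b ^ n)⁻¹ ≤ M ^ (n - 1) * (2 / u) ^ n * b⁻¹ :=
        hstep a b ha0 hb0 hcb h
      _ ≤ M ^ (n - 1) * (2 / u) ^ n * (a⁻¹ + b⁻¹) := by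
        exact mul_le_mul_of_nonneg_left (le_add_of_nonneg_left (by positivity)) (by positivity)
  · calc (a ^ n)⁻¹ * (b ^ n)⁻¹ = (b ^ n)⁻¹ * (a ^ n)⁻¹ := by ring
      _ ≤ M ^ (n - 1) * (2 / u) ^ n * a⁻¹ := hstep b a hb0 ha0 hca h
      _ ≤ M ^ (n - 1) * (2 / u) ^ n * (a⁻¹ + b⁻¹) := by
        exact mul_le_mul_of_nonneg_left (le_add_of_nonneg_right (by positivity)) (by positivity)

lemma aux_arsinh_eventually (c ε : ℝ) (hc : 0 < c) (hε : 0 < ε) :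
    ∀ᶠ T : ℝ in atTop, Real.arsinh (3 * T / c) ≤ T ^ (ε / 2) := by
  have hε2 : 0 < ε / 2 := by positivity
  have h1 := (isLittleO_log_rpow_atTop hε2).bound (by norm_num : (0:ℝ) < 1/2)
  have h2 := (tendsto_rpow_atTop hε2).eventually_ge_atTop
    (2 * (2 * Real.log 3 - Real.log c))
  filter_upwards [h1, h2, eventually_ge_atTop (max 1 (c / 3)),
    eventually_ge_atTop 1] with T hb hcst hTc hT1
  have hTc' : c / 3 ≤ T := le_trans (le_max_right _ _) hTc
  have hx1 : (1 : ℝ) ≤ 3 * T / c := by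
    rw [le_div_iff₀ hc]; linarith
  have hx0 : (0 : ℝ) < 3 * T / c := by linarith
  have harsinh : Real.arsinh (3 * T / c)
      ≤ Real.log 3 + Real.log (3 * T / c) := by
    set x := 3 * T / c with hxdef
    have hs : Real.sqrt (1 + x ^ 2) ≤ 2 * x := by
      rw [show (2 * x : ℝ) = Real.sqrt ((2 * x) ^ 2) from
        (Real.sqrt_sq (by linarith)).symm]
      exact Real.sqrt_le_sqrt (by nlinarith)
    calc Real.arsinh x = Real.log (x + Real.sqrt (1 + x ^ 2)) := rfl
      _ ≤ Real.log (3 * x) := Real.log_le_log (by positivity) (by nlinarith)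
      _ = Real.log 3 + Real.log x := Real.log_mul (by norm_num) (by linarith)
  have hlog : Real.log (3 * T / c) = Real.log 3 + Real.log T - Real.log c := by
    rw [Real.log_div (by positivity) hc.ne', Real.log_mul (by norm_num) (by linarith)]
  rw [Real.norm_eq_abs, Real.norm_eq_abs, _root_.abs_of_nonneg (Real.log_nonneg hT1),
    _root_.abs_of_nonneg (Real.rpow_nonneg (by linarith) _)] at hb
  linarith

/-- The sum `L₂` over pairs of distant singular points satisfies
`L₂ = O(T^(2d+ε) U^(-n) X^(2(ρ+u)))` for every integer `n ≥ 1`. -/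
theorem far_pairs_bound (S : ZetaSystem) (d₁ : ℝ) (hd₁ : S.annulusBound d₁)
    (ρ : ℝ) (hρ1 : ρ ≤ 1) (hρfin : S.finitelyManySingIn ρ)
    (T'' : ℝ) (hT'' : ∀ m : ℕ, ρ ≤ (S.Λ m).re → |(S.Λ m).im| < T'')
    (u : ℝ) (hu : 1 < u) (c : ℝ) (hc : 0 < c) (n : ℕ) (hn : 1 ≤ n)
    (U : ℝ → ℝ) (hUpos : ∀ T : ℝ, 0 < U T) (hUo : U =o[atTop] fun T : ℝ => T) :
    ∀ ε : ℝ, 0 < ε → ∃ C : ℝ, 0 < C ∧ ∀ᶠ T : ℝ in atTop, ∀ X : ℝ, 2 ≤ X →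
      (∑' q : S.farPairs T'' T (U T),
        ∫ t in T..(2 * T), X ^ (2 * (ρ + u)) *
          ‖(c : ℂ) + (((S.Λ (q : ℕ × ℕ).1).im - t : ℝ) : ℂ) * Complex.I‖
            ^ (-(n : ℝ)) *
          ‖(c : ℂ) - (((S.Λ (q : ℕ × ℕ).2).im - t : ℝ) : ℂ) * Complex.I‖
            ^ (-(n : ℝ)))
        ≤ C * T ^ (2 * S.d + ε) * U T ^ (-(n : ℝ)) * X ^ (2 * (ρ + u)) := by
  intro ε hε
  obtain ⟨C₁, hC₁, hcount⟩ := S.count_upper (ε / 4) (by positivity)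
  set M := max 1 c⁻¹ with hMdef
  have hM0 : (0 : ℝ) < M := lt_of_lt_of_le one_pos (le_max_left _ _)
  refine ⟨C₁ ^ 2 * 4 ^ (2 * S.d + ε / 2) * M ^ (n - 1) * 2 ^ n * 4, by positivity, ?_⟩
  filter_upwards [aux_arsinh_eventually c ε hc hε, eventually_ge_atTop 2] with T hAT hT2
  intro X hX
  have hT0 : (0 : ℝ) < T := by linarith
  have hX0 : (0 : ℝ) < X := by linarith
  set A := Real.arsinh (3 * T / c) with hAdef
  have hA0 : (0 : ℝ) ≤ A := Real.arsinh_nonneg_iff.2 (by positivity)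
  set UT := U T with hUTdef
  have hUT0 : 0 < UT := hUpos T
  set p := 2 * (ρ + u) with hpdef
  have hXp : (0 : ℝ) ≤ X ^ p := Real.rpow_nonneg hX0.le _
  set S4 : Set ℕ := {m : ℕ | ‖S.Λ m‖ < 4 * T} with hS4def
  have hS4fin : S4.Finite := S.Λ_finite (4 * T)
  have hsub : S.farPairs T'' T UT ⊆ S4 ×ˢ S4 := by
    rintro ⟨m₁, m₂⟩ ⟨⟨h1i, h1r⟩, ⟨h2i, h2r⟩, ⟨h1l, h1u⟩, ⟨h2l, h2u⟩, -⟩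
    have key : ∀ m : ℕ, T'' < |(S.Λ m).im| → -T < (S.Λ m).re →
        T / 2 < (S.Λ m).im → (S.Λ m).im < 3 * T → m ∈ S4 := by
      intro m hi hr hl hu'
      have hre : (S.Λ m).re < ρ := by
        by_contra hcon
        exact absurd (hT'' m (le_of_not_gt hcon)) (not_lt.2 hi.le)
      have htri : ‖S.Λ m‖ ≤ |(S.Λ m).re| + |(S.Λ m).im| :=
        Complex.norm_le_abs_re_add_abs_im _
      have hre' : |(S.Λ m).re| < T := abs_lt.2 ⟨hr, by linarith⟩
      have him : |(S.Λ m).im| < 3 * T := abs_lt.2 ⟨by linarith, hu'⟩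
      simp only [hS4def, Set.mem_setOf_eq]
      linarith
    exact ⟨key m₁ h1i h1r h1l h1u, key m₂ h2i h2r h2l h2u⟩
  have hfinFP : (S.farPairs T'' T UT).Finite := (hS4fin.prod hS4fin).subset hsub
  haveI := hfinFP.fintype
  rw [tsum_fintype]
  set B : ℝ := X ^ p * (M ^ (n - 1) * (2 / UT) ^ n * (4 * A)) with hBdef
  have hB0 : (0 : ℝ) ≤ B := by
    apply mul_nonneg hXp
    apply mul_nonneg (by positivity)
    positivity
  refine le_trans (Finset.sum_le_card_nsmul Finset.univ _ B ?_) ?_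
  · -- per term bound
    intro q _
    have hq := q.2
    simp only [ZetaSystem.farPairs, Set.mem_setOf_eq] at hq
    obtain ⟨-, -, ⟨h1l, h1u⟩, ⟨h2l, h2u⟩, hdist⟩ := hq
    set β₁ := (S.Λ (q : ℕ × ℕ).1).im with hβ₁
    set β₂ := (S.Λ (q : ℕ × ℕ).2).im with hβ₂
    have hsqc : ∀ β : ℝ, Continuous fun t : ℝ => Real.sqrt (c ^ 2 + (β - t) ^ 2) :=
      fun β => (continuous_const.add ((continuous_const.sub continuous_id).pow 2)).sqrt
    have hsqpos : ∀ β t : ℝ, 0 < Real.sqrt (c ^ 2 + (β - t) ^ 2) := fun β t =>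
      Real.sqrt_pos.2 (by positivity)
    have hcle : ∀ β t : ℝ, c ≤ Real.sqrt (c ^ 2 + (β - t) ^ 2) := by
      intro β t
      calc c = Real.sqrt (c ^ 2) := (Real.sqrt_sq hc.le).symm
        _ ≤ _ := Real.sqrt_le_sqrt (le_add_of_nonneg_right (sq_nonneg _))
    have habs : ∀ β t : ℝ, |β - t| ≤ Real.sqrt (c ^ 2 + (β - t) ^ 2) := by
      intro β t
      calc |β - t| = Real.sqrt ((β - t) ^ 2) := (Real.sqrt_sq_eq_abs _).symm
        _ ≤ _ := Real.sqrt_le_sqrt (le_add_of_nonneg_left (sq_nonneg _))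
    have hwcont : ∀ β : ℝ, Continuous fun t : ℝ => (Real.sqrt (c ^ 2 + (β - t) ^ 2))⁻¹ :=
      fun β => (hsqc β).inv₀ (fun t => (hsqpos β t).ne')
    have hhcont : ∀ β : ℝ,
        Continuous fun t : ℝ => ((Real.sqrt (c ^ 2 + (β - t) ^ 2)) ^ n)⁻¹ :=
      fun β => ((hsqc β).pow n).inv₀ (fun t => pow_ne_zero n (hsqpos β t).ne')
    have hEq : Set.EqOn
        (fun t : ℝ => X ^ p *
          ‖(c : ℂ) + ((β₁ - t : ℝ) : ℂ) * Complex.I‖ ^ (-(n : ℝ)) *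
          ‖(c : ℂ) - ((β₂ - t : ℝ) : ℂ) * Complex.I‖ ^ (-(n : ℝ)))
        (fun t : ℝ => X ^ p *
          (((Real.sqrt (c ^ 2 + (β₁ - t) ^ 2)) ^ n)⁻¹ *
            ((Real.sqrt (c ^ 2 + (β₂ - t) ^ 2)) ^ n)⁻¹))
        (Set.uIcc T (2 * T)) := by
      intro t _
      have e1 : ‖(c : ℂ) + ((β₁ - t : ℝ) : ℂ) * Complex.I‖ ^ (-(n : ℝ))
          = ((Real.sqrt (c ^ 2 + (β₁ - t) ^ 2)) ^ n)⁻¹ := by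
        rw [Complex.norm_add_mul_I, Real.rpow_neg (Real.sqrt_nonneg _), Real.rpow_natCast]
      have e2 : ‖(c : ℂ) - ((β₂ - t : ℝ) : ℂ) * Complex.I‖ ^ (-(n : ℝ))
          = ((Real.sqrt (c ^ 2 + (β₂ - t) ^ 2)) ^ n)⁻¹ := by
        rw [show (c : ℂ) - ((β₂ - t : ℝ) : ℂ) * Complex.I
            = (c : ℂ) + ((-(β₂ - t) : ℝ) : ℂ) * Complex.I by push_cast; ring,
          Complex.norm_add_mul_I, neg_sq, Real.rpow_neg (Real.sqrt_nonneg _),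
          Real.rpow_natCast]
      simp only [e1, e2, mul_assoc]
    rw [intervalIntegral.integral_congr hEq, intervalIntegral.integral_const_mul]
    rw [hBdef]
    apply mul_le_mul_of_nonneg_left _ hXp
    have hmono : (∫ t in T..(2 * T),
          ((Real.sqrt (c ^ 2 + (β₁ - t) ^ 2)) ^ n)⁻¹ *
            ((Real.sqrt (c ^ 2 + (β₂ - t) ^ 2)) ^ n)⁻¹)
        ≤ ∫ t in T..(2 * T), M ^ (n - 1) * (2 / UT) ^ n *
            ((Real.sqrt (c ^ 2 + (β₁ - t) ^ 2))⁻¹ +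
              (Real.sqrt (c ^ 2 + (β₂ - t) ^ 2))⁻¹) := by
      apply intervalIntegral.integral_mono_on (by linarith : T ≤ 2 * T)
      · exact ((hhcont β₁).mul (hhcont β₂)).intervalIntegrable _ _
      · exact (continuous_const.mul ((hwcont β₁).add (hwcont β₂))).intervalIntegrable _ _
      · intro t ht
        have hor : UT / 2 ≤ |β₁ - t| ∨ UT / 2 ≤ |β₂ - t| := by
          by_contra hcon
          push_neg at hcon
          have h1 := abs_add_le (β₁ - t) (t - β₂)
          rw [show β₁ - t + (t - β₂) = β₁ - β₂ by ring] at h1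
          rw [abs_sub_comm t β₂] at h1
          have := hcon.1
          have := hcon.2
          linarith
        have hor' : UT / 2 ≤ Real.sqrt (c ^ 2 + (β₁ - t) ^ 2) ∨
            UT / 2 ≤ Real.sqrt (c ^ 2 + (β₂ - t) ^ 2) := by
          rcases hor with h | h
          · exact Or.inl (le_trans h (habs β₁ t))
          · exact Or.inr (le_trans h (habs β₂ t))
        exact aux_pointwise c UT _ _ n hn hc hUT0 (hcle β₁ t) (hcle β₂ t) hor'
    refine le_trans hmono ?_
    rw [intervalIntegral.integral_const_mul]
    apply mul_le_mul_of_nonneg_left _ (by positivity)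
    rw [intervalIntegral.integral_add ((hwcont β₁).intervalIntegrable _ _)
      ((hwcont β₂).intervalIntegrable _ _)]
    have i1 := aux_integral_arsinh c β₁ T hc hT0.le (by linarith) h1u
    have i2 := aux_integral_arsinh c β₂ T hc hT0.le (by linarith) h2u
    rw [hAdef]
    linarith
  · -- card bound and arithmetic
    rw [nsmul_eq_mul, Finset.card_univ, ← Nat.card_eq_fintype_card]
    have hcard : ((Nat.card (S.farPairs T'' T UT) : ℕ) : ℝ)
        ≤ (C₁ * (4 * T) ^ (S.d + ε / 4)) ^ 2 := by
      have e2 : Nat.card (S.farPairs T'' T UT) ≤ Nat.card ↥(S4 ×ˢ S4) :=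
        Nat.card_mono (hS4fin.prod hS4fin) hsub
      have e3 : Nat.card ↥(S4 ×ˢ S4) = Nat.card S4 * Nat.card S4 := by
        rw [Nat.card_congr (Equiv.Set.prod S4 S4), Nat.card_prod]
      have e4 : (Nat.card S4 : ℝ) ≤ C₁ * (4 * T) ^ (S.d + ε / 4) :=
        hcount (4 * T) (by linarith)
      have e5 : ((Nat.card (S.farPairs T'' T UT) : ℕ) : ℝ)
          ≤ (Nat.card S4 : ℝ) * (Nat.card S4 : ℝ) := by
        exact_mod_cast e3 ▸ e2
      refine e5.trans ?_
      rw [sq]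
      exact mul_le_mul e4 e4 (Nat.cast_nonneg _) (by positivity)
    have hyy : ((4 * T) ^ (S.d + ε / 4)) ^ 2
        = 4 ^ (2 * S.d + ε / 2) * T ^ (2 * S.d + ε / 2) := by
      rw [← Real.rpow_natCast ((4 * T) ^ (S.d + ε / 4)) 2,
        ← Real.rpow_mul (by linarith : (0 : ℝ) ≤ 4 * T),
        show (S.d + ε / 4) * ((2 : ℕ) : ℝ) = 2 * S.d + ε / 2 by push_cast; ring,
        Real.mul_rpow (by norm_num) hT0.le]
    calc ((Nat.card (S.farPairs T'' T UT) : ℕ) : ℝ) * B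
        ≤ (C₁ * (4 * T) ^ (S.d + ε / 4)) ^ 2 * B :=
          mul_le_mul_of_nonneg_right hcard hB0
      _ = C₁ ^ 2 * (4 ^ (2 * S.d + ε / 2) * T ^ (2 * S.d + ε / 2)) * B := by
          rw [mul_pow, hyy]
      _ ≤ C₁ ^ 2 * (4 ^ (2 * S.d + ε / 2) * T ^ (2 * S.d + ε / 2)) *
            (X ^ p * (M ^ (n - 1) * (2 / UT) ^ n * (4 * T ^ (ε / 2)))) := by
          apply mul_le_mul_of_nonneg_left _ (by positivity)
          rw [hBdef]
          apply mul_le_mul_of_nonneg_left _ hXp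
          apply mul_le_mul_of_nonneg_left _ (by positivity)
          exact mul_le_mul_of_nonneg_left hAT (by norm_num)
      _ = C₁ ^ 2 * 4 ^ (2 * S.d + ε / 2) * M ^ (n - 1) * 2 ^ n * 4 *
            T ^ (2 * S.d + ε) * UT ^ (-(n : ℝ)) * X ^ p := by
          rw [show UT ^ (-(n : ℝ)) = ((UT : ℝ) ^ n)⁻¹ by
              rw [Real.rpow_neg hUT0.le, Real.rpow_natCast],
            show T ^ (2 * S.d + ε) = T ^ (2 * S.d + ε / 2) * T ^ (ε / 2) by
              rw [← Real.rpow_add hT0]; ring_nf,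
            div_pow]
          field_simp
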